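/- Let A be an N×N Hermitian complex matrix and let k ≥ 1 be an integer. Then the rank-k numerical range Λ_k(A) is a convex subset of ℂ. -/

import Mathlib

open Matrix Complex Finset

/-- The rank-k numerical range of a square complex matrix `T`:
all `λ ∈ ℂ` such that `P T P = λ P` for some orthogonal projection `P` of rank `k`. -/
def rankKRange {n : Type*} [Fintype n] [DecidableEq n]
    (k : ℕ) (T : Matrix n n ℂ) : Set ℂ :=
  {lam : ℂ | ∃ P : Matrix n n ℂ,
    P.IsHermitian ∧ P * P = P ∧ P.rank = k ∧ P * T * P = lam • P}

section Conj

variable {n : Type*} [Fintype n] [DecidableEq n]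

lemma rankKRange_conj_subset (k : ℕ) (A U : Matrix n n ℂ)
    (h1 : U * star U = 1) (h2 : star U * U = 1) :
    rankKRange k (star U * A * U) ⊆ rankKRange k A := by
  rintro lam ⟨P, hP1, hP2, hP3, hP4⟩
  refine ⟨U * P * star U, ?_, ?_, ?_, ?_⟩
  · show (U * P * star U)ᴴ = U * P * star U
    rw [Matrix.conjTranspose_mul, Matrix.conjTranspose_mul, hP1,
      ← Matrix.star_eq_conjTranspose, ← Matrix.star_eq_conjTranspose, star_star,
      Matrix.mul_assoc]
  · calc (U * P * star U) * (U * P * star U)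
        = U * (P * (star U * U) * P) * star U := by noncomm_ring
      _ = U * P * star U := by rw [h2, Matrix.mul_one, hP2]
  · refine le_antisymm ?_ ?_
    · exact le_trans (Matrix.rank_mul_le_left _ _)
        (le_trans (Matrix.rank_mul_le_right _ _) (le_of_eq hP3))
    · have hrw : P = star U * (U * P * star U) * U := by
        calc P = (star U * U) * P * (star U * U) := by rw [h2, Matrix.one_mul, Matrix.mul_one]
          _ = star U * (U * P * star U) * U := by noncomm_ring
      conv_lhs => rw [← hP3, hrw]
      exact le_trans (Matrix.rank_mul_le_left _ _) (Matrix.rank_mul_le_right _ _)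
  · calc (U * P * star U) * A * (U * P * star U)
        = U * (P * (star U * A * U) * P) * star U := by noncomm_ring
      _ = U * (lam • P) * star U := by rw [hP4]
      _ = lam • (U * P * star U) := by
          rw [Matrix.mul_smul, Matrix.smul_mul]

lemma rankKRange_conj (k : ℕ) (A U : Matrix n n ℂ)
    (h1 : U * star U = 1) (h2 : star U * U = 1) :
    rankKRange k (star U * A * U) = rankKRange k A := by
  refine le_antisymm (rankKRange_conj_subset k A U h1 h2) ?_
  have := rankKRange_conj_subset k (star U * A * U) (star U)
    (by simpa using h2) (by simpa using h1)
  have hrw : star (star U) * (star U * A * U) * star U = A := by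
    rw [star_star]
    calc U * (star U * A * U) * star U = (U * star U) * A * (U * star U) := by noncomm_ring
      _ = A := by rw [h1, Matrix.one_mul, Matrix.mul_one]
  rwa [hrw] at this

end Conj

section Diag

variable {N k : ℕ}

/-- Construction direction: given suitable index pairings, a real number `r` lies in the
rank-k numerical range of a real diagonal matrix. -/
lemma mem_rankKRange_diagonal (e : Fin N → ℝ) (r : ℝ)
    (a b : Fin k → Fin N) (ha : Function.Injective a) (hb : Function.Injective b)
    (hra : ∀ i, r ≤ e (a i)) (hrb : ∀ i, e (b i) ≤ r)
    (hcol : ∀ i j, a i = b j → e (a i) = e (b i) ∧ e (a j) = e (b j)) :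
    (r : ℂ) ∈ rankKRange k (Matrix.diagonal fun m => (e m : ℂ)) := by
  classical
  -- the interpolation parameters
  set t : Fin k → ℝ := fun i =>
    if e (a i) = e (b i) then 1 else (r - e (b i)) / (e (a i) - e (b i)) with ht_def
  have ht0 : ∀ i, 0 ≤ t i := by
    intro i
    rw [ht_def]
    dsimp only
    split
    · norm_num
    · next h =>
      have hlt : e (b i) < e (a i) := lt_of_le_of_ne (le_trans (hrb i) (hra i)) (Ne.symm h)
      exact div_nonneg (by linarith [hrb i]) (by linarith)
  have ht1 : ∀ i, t i ≤ 1 := by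
    intro i
    rw [ht_def]
    dsimp only
    split
    · exact le_rfl
    · next h =>
      have hlt : e (b i) < e (a i) := lt_of_le_of_ne (le_trans (hrb i) (hra i)) (Ne.symm h)
      rw [div_le_one (by linarith)]
      have := hra i
      linarith
  have htr : ∀ i, t i * e (a i) + (1 - t i) * e (b i) = r := by
    intro i
    rw [ht_def]
    dsimp only
    split
    · next h =>
      have h1 : e (a i) = r := le_antisymm (by rw [h]; exact hrb i) (hra i)
      have h2 : e (b i) = r := by rw [← h]; exact h1
      rw [h1, h2]; ring
    · next h =>
      have hlt : e (b i) < e (a i) := lt_of_le_of_ne (le_trans (hrb i) (hra i)) (Ne.symm h)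
      have hd : e (a i) - e (b i) ≠ 0 := by linarith
      have hdc : (r - e (b i)) / (e (a i) - e (b i)) * (e (a i) - e (b i)) = r - e (b i) :=
        div_mul_cancel₀ _ hd
      linear_combination hdc
  -- the orthonormal family
  set u : Fin k → Fin N → ℝ := fun i m =>
    (if m = a i then Real.sqrt (t i) else 0) + (if m = b i then Real.sqrt (1 - t i) else 0)
    with hu_def
  -- degenerate pairs have t = 1
  have hdeg : ∀ i, e (a i) = e (b i) → t i = 1 := by
    intro i h; rw [ht_def]; simp [h]
  -- main summation identity
  have keysum : ∀ (w : Fin N → ℝ) (i j : Fin k),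
      ∑ m, w m * (u i m * u j m) =
        if i = j then t i * w (a i) + (1 - t i) * w (b i) else 0 := by
    intro w i j
    have expand : ∀ m, w m * (u i m * u j m) =
        (if m = a j then w m * u i m * Real.sqrt (t j) else 0) +
        (if m = b j then w m * u i m * Real.sqrt (1 - t j) else 0) := by
      intro m
      have hujm : u j m = (if m = a j then Real.sqrt (t j) else 0) +
          (if m = b j then Real.sqrt (1 - t j) else 0) := rfl
      rw [hujm]
      simp only [mul_add, mul_ite, mul_zero, mul_assoc]
    rw [Finset.sum_congr rfl (fun m _ => expand m), Finset.sum_add_distrib,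
      Finset.sum_ite_eq' Finset.univ (a j), Finset.sum_ite_eq' Finset.univ (b j)]
    simp only [Finset.mem_univ, if_true]
    by_cases hij : i = j
    · subst hij
      rw [if_pos rfl]
      have hua : u i (a i) = Real.sqrt (t i) + (if a i = b i then Real.sqrt (1 - t i) else 0) := by
        rw [hu_def]; simp
      have hub : u i (b i) = (if b i = a i then Real.sqrt (t i) else 0) + Real.sqrt (1 - t i) := by
        rw [hu_def]; simp
      by_cases hab : a i = b i
      · have h1 := hdeg i (hcol i i hab).1
        rw [hua, hub, if_pos hab, if_pos hab.symm, h1, hab]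
        rw [sub_self, Real.sqrt_zero, Real.sqrt_one]
        ring
      · rw [hua, hub, if_neg hab, if_neg (fun h : b i = a i => hab h.symm)]
        rw [add_zero, zero_add, mul_assoc, mul_assoc,
          Real.mul_self_sqrt (ht0 i), Real.mul_self_sqrt (by linarith [ht1 i])]
        ring
    · rw [if_neg hij]
      have haa : a j ≠ a i := fun h => hij (ha h).symm
      have hbb : b j ≠ b i := fun h => hij (hb h).symm
      have hui_aj : u i (a j) = if a j = b i then Real.sqrt (1 - t i) else 0 := by
        rw [hu_def]; simp [if_neg haa]
      have hui_bj : u i (b j) = if b j = a i then Real.sqrt (t i) else 0 := by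
        rw [hu_def]; simp [if_neg hbb]
      rw [hui_aj, hui_bj]
      by_cases h1 : a j = b i
      · have hd := hcol j i h1
        have ht_i : t i = 1 := hdeg i hd.2
        have ht_j : t j = 1 := hdeg j hd.1
        by_cases h2 : b j = a i
        · have hd2 := hcol i j h2.symm
          simp [h1, h2, ht_i, ht_j]
        · simp [h1, h2, ht_i]
      · by_cases h2 : b j = a i
        · have hd2 := hcol i j h2.symm
          have ht_j : t j = 1 := hdeg j hd2.2
          simp [h1, h2, ht_j]
        · simp [h1, h2]
  -- the complex vectors
  set v : Fin k → Fin N → ℂ := fun i m => ((u i m : ℝ) : ℂ) with hv_def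
  have orthC : ∀ i j, ∑ m, v i m * v j m = if i = j then (1 : ℂ) else 0 := by
    intro i j
    have h := keysum (fun _ => 1) i j
    simp only [one_mul] at h
    have hc : ∑ m, v i m * v j m = ((∑ m, u i m * u j m : ℝ) : ℂ) := by
      simp only [hv_def]
      push_cast
      rfl
    rw [hc, h]
    split <;> norm_num
  have eC : ∀ i j, ∑ m, (e m : ℂ) * (v i m * v j m) = if i = j then (r : ℂ) else 0 := by
    intro i j
    have h := keysum e i j
    have hc : ∑ m, (e m : ℂ) * (v i m * v j m) = ((∑ m, e m * (u i m * u j m) : ℝ) : ℂ) := by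
      simp only [hv_def]
      push_cast
      rfl
    rw [hc, h]
    split
    · next hij => subst hij; rw [htr i]
    · norm_num
  set P : Matrix (Fin N) (Fin N) ℂ := Matrix.of fun m l => ∑ i, v i m * v i l with hP_def
  have hPapp : ∀ m l, P m l = ∑ i, v i m * v i l := fun m l => rfl
  refine ⟨P, ?_, ?_, ?_, ?_⟩
  · show Pᴴ = P
    ext m l
    rw [Matrix.conjTranspose_apply, hPapp, hPapp, star_sum]
    refine Finset.sum_congr rfl fun i _ => ?_
    simp only [hv_def]
    rw [← Complex.ofReal_mul, ← Complex.ofReal_mul, Complex.star_def, Complex.conj_ofReal,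
      mul_comm]
  · ext m l
    rw [Matrix.mul_apply]
    simp only [hPapp]
    calc ∑ c, (∑ i, v i m * v i c) * ∑ j, v j c * v j l
        = ∑ c, ∑ i, ∑ j, (v i m * v j l) * (v i c * v j c) := by
          refine Finset.sum_congr rfl fun c _ => ?_
          rw [Finset.sum_mul]
          refine Finset.sum_congr rfl fun i _ => ?_
          rw [Finset.mul_sum]
          exact Finset.sum_congr rfl fun j _ => by ring
      _ = ∑ i, ∑ j, (v i m * v j l) * ∑ c, v i c * v j c := by
          rw [Finset.sum_comm]
          refine Finset.sum_congr rfl fun i _ => ?_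
          rw [Finset.sum_comm]
          exact Finset.sum_congr rfl fun j _ => by rw [Finset.mul_sum]
      _ = ∑ i, v i m * v i l := by
          refine Finset.sum_congr rfl fun i _ => ?_
          rw [Finset.sum_congr rfl fun j _ => by rw [orthC i j]]
          simp [Finset.sum_ite_eq]
  · show Module.finrank ℂ (LinearMap.range P.mulVecLin) = k
    have hmv : ∀ y, P *ᵥ y = ∑ i, (∑ c, v i c * y c) • v i := by
      intro y
      funext m
      rw [Matrix.mulVec, dotProduct]
      simp only [hPapp]
      rw [Finset.sum_apply]
      calc ∑ c, (∑ i, v i m * v i c) * y c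
          = ∑ c, ∑ i, (v i c * y c) * v i m := by
            refine Finset.sum_congr rfl fun c _ => ?_
            rw [Finset.sum_mul]
            exact Finset.sum_congr rfl fun i _ => by ring
        _ = ∑ i, ∑ c, (v i c * y c) * v i m := Finset.sum_comm
        _ = ∑ i, ((∑ c, v i c * y c) • v i) m := by
            refine Finset.sum_congr rfl fun i _ => ?_
            rw [Pi.smul_apply, smul_eq_mul, Finset.sum_mul]
    have hfix : ∀ j, P *ᵥ v j = v j := by
      intro j
      rw [hmv]
      calc ∑ i, (∑ c, v i c * v j c) • v i
          = ∑ i, (if i = j then (1:ℂ) else 0) • v i := by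
            exact Finset.sum_congr rfl fun i _ => by rw [orthC i j]
        _ = v j := by simp [ite_smul, Finset.sum_ite_eq']
    have hli : LinearIndependent ℂ v := by
      rw [Fintype.linearIndependent_iff]
      intro g hg i
      have h0 : ∑ m, v i m * (∑ j, g j • v j) m = 0 := by rw [hg]; simp
      rw [show ∑ m, v i m * (∑ j, g j • v j) m = ∑ j, g j * ∑ m, v i m * v j m by
        calc ∑ m, v i m * (∑ j, g j • v j) m
            = ∑ m, ∑ j, g j * (v i m * v j m) := by
              refine Finset.sum_congr rfl fun m _ => ?_
              rw [Finset.sum_apply, Finset.mul_sum]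
              exact Finset.sum_congr rfl fun j _ => by
                rw [Pi.smul_apply, smul_eq_mul]; ring
          _ = ∑ j, ∑ m, g j * (v i m * v j m) := Finset.sum_comm
          _ = ∑ j, g j * ∑ m, v i m * v j m := by
              refine Finset.sum_congr rfl fun j _ => (Finset.mul_sum _ _ _).symm] at h0
      simp only [orthC, mul_ite, mul_one, mul_zero, Finset.sum_ite_eq, Finset.sum_ite_eq',
        Finset.mem_univ, if_true] at h0
      exact h0
    have hrange : LinearMap.range P.mulVecLin = Submodule.span ℂ (Set.range v) := by
      refine le_antisymm ?_ ?_
      · rintro x ⟨y, rfl⟩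
        rw [Matrix.mulVecLin_apply, hmv]
        exact Submodule.sum_mem _ fun i _ =>
          Submodule.smul_mem _ _ (Submodule.subset_span ⟨i, rfl⟩)
      · rw [Submodule.span_le]
        rintro x ⟨j, rfl⟩
        exact ⟨v j, by rw [Matrix.mulVecLin_apply, hfix]⟩
    rw [hrange, finrank_span_eq_card hli, Fintype.card_fin]
  · ext m l
    rw [Matrix.smul_apply, Matrix.mul_apply]
    have hDP : ∀ c l, ((Matrix.diagonal fun m => (e m : ℂ)) * P) c l = (e c : ℂ) * P c l := by
      intro c l; rw [Matrix.diagonal_mul]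
    simp only [Matrix.mul_apply] at hDP
    calc ∑ c, (∑ x, P m x * (Matrix.diagonal fun m => (e m : ℂ)) x c) * P c l
        = ∑ c, (P m c * (e c : ℂ)) * P c l := by
          refine Finset.sum_congr rfl fun c _ => ?_
          congr 1
          rw [Finset.sum_eq_single c (fun x _ hx => by
            rw [Matrix.diagonal_apply_ne _ hx, mul_zero]) (by simp)]
          rw [Matrix.diagonal_apply_eq]
      _ = ∑ i, ∑ j, (v i m * v j l) * ∑ c, (e c : ℂ) * (v i c * v j c) := by
          simp only [hPapp]
          calc ∑ c, ((∑ i, v i m * v i c) * (e c : ℂ)) * ∑ j, v j c * v j l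
              = ∑ c, ∑ i, ∑ j, (v i m * v j l) * ((e c : ℂ) * (v i c * v j c)) := by
                refine Finset.sum_congr rfl fun c _ => ?_
                rw [Finset.sum_mul, Finset.sum_mul]
                refine Finset.sum_congr rfl fun i _ => ?_
                rw [Finset.mul_sum]
                exact Finset.sum_congr rfl fun j _ => by ring
            _ = ∑ i, ∑ j, (v i m * v j l) * ∑ c, (e c : ℂ) * (v i c * v j c) := by
                rw [Finset.sum_comm]
                refine Finset.sum_congr rfl fun i _ => ?_
                rw [Finset.sum_comm]
                exact Finset.sum_congr rfl fun j _ => by rw [Finset.mul_sum]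
      _ = (r : ℂ) * P m l := by
          simp only [eC, hPapp]
          rw [Finset.mul_sum]
          refine Finset.sum_congr rfl fun i _ => ?_
          rw [Finset.sum_congr rfl fun j _ => rfl]
          simp [Finset.sum_ite_eq, mul_ite]
          ring

end Diag

section UpperBound

lemma neg_mem_rankKRange_diagonal {N k : ℕ} (e : Fin N → ℝ) (lam : ℂ)
    (h : lam ∈ rankKRange k (Matrix.diagonal fun m => (e m : ℂ))) :
    -lam ∈ rankKRange k (Matrix.diagonal fun m => ((-(e m) : ℝ) : ℂ)) := by
  obtain ⟨P, h1, h2, h3, h4⟩ := h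
  refine ⟨P, h1, h2, h3, ?_⟩
  have hneg : (Matrix.diagonal fun m => ((-(e m) : ℝ) : ℂ))
      = -(Matrix.diagonal fun m => (e m : ℂ)) := by
    have : (fun m : Fin N => ((-(e m) : ℝ) : ℂ)) = fun m => -((e m : ℝ) : ℂ) := by
      funext m; push_cast; rfl
    rw [this, Matrix.diagonal_neg]
  rw [hneg, Matrix.mul_neg, Matrix.neg_mul, h4, neg_smul]

lemma rankKRange_diagonal_le {N k : ℕ} (hkN : k ≤ N) (e : Fin N → ℝ) (lam : ℂ)
    (hmem : lam ∈ rankKRange k (Matrix.diagonal fun m => (e m : ℂ)))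
    (f : Fin (N - k + 1) → Fin N) (hf : Function.Injective f)
    (c : ℝ) (hc : ∀ j, e (f j) ≤ c) :
    ∃ s : ℝ, lam = (s : ℂ) ∧ s ≤ c := by
  classical
  obtain ⟨P, hP1, hP2, hP3, hP4⟩ := hmem
  set D := Matrix.diagonal fun m => (e m : ℂ) with hD_def
  set W := LinearMap.range P.mulVecLin with hW_def
  have hW : Module.finrank ℂ W = k := hP3
  set sv : Fin (N - k + 1) → (Fin N → ℂ) := fun j => Pi.single (f j) (1 : ℂ) with hsv_def
  have hind : LinearIndependent ℂ sv := by
    rw [Fintype.linearIndependent_iff]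
    intro g hg j0
    have hcf := congrFun hg (f j0)
    simp only [hsv_def, Finset.sum_apply, Pi.smul_apply, Pi.single_apply, smul_eq_mul,
      mul_ite, mul_one, mul_zero, Pi.zero_apply, hf.eq_iff] at hcf
    rwa [Finset.sum_ite_eq Finset.univ j0, if_pos (Finset.mem_univ _)] at hcf
  set S := Submodule.span ℂ (Set.range sv) with hS_def
  have hS : Module.finrank ℂ S = N - k + 1 := by
    rw [hS_def, finrank_span_eq_card hind, Fintype.card_fin]
  have hsup : Module.finrank ℂ (W ⊔ S : Submodule ℂ (Fin N → ℂ)) ≤ N := by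
    refine le_trans (Submodule.finrank_le _) ?_
    rw [Module.finrank_fintype_fun_eq_card, Fintype.card_fin]
  have hkey := Submodule.finrank_sup_add_finrank_inf_eq W S
  have hinf : 0 < Module.finrank ℂ ((W ⊓ S : Submodule ℂ (Fin N → ℂ))) := by omega
  have hne : (W ⊓ S : Submodule ℂ (Fin N → ℂ)) ≠ ⊥ := by
    intro hbot
    rw [hbot, finrank_bot] at hinf
    omega
  obtain ⟨x, hxmem, hx0⟩ := Submodule.exists_mem_ne_zero_of_ne_bot hne
  have hxW : x ∈ W := hxmem.1
  have hfix : P *ᵥ x = x := by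
    obtain ⟨y, hy⟩ := hxW
    have hy' : P *ᵥ y = x := hy
    rw [← hy', Matrix.mulVec_mulVec, hP2]
  have hsupp : ∀ m, m ∉ Set.range f → x m = 0 := by
    have hSK : S ≤
        ({ carrier := {z | ∀ m, m ∉ Set.range f → z m = 0}
           add_mem' := fun hz hw m hm => by
             rw [Pi.add_apply, hz m hm, hw m hm, add_zero]
           zero_mem' := fun m _ => rfl
           smul_mem' := fun c z hz m hm => by
             rw [Pi.smul_apply, hz m hm, smul_zero] } : Submodule ℂ (Fin N → ℂ)) := by
      rw [hS_def, Submodule.span_le]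
      rintro _ ⟨j, rfl⟩ m hm
      rw [hsv_def]
      dsimp only
      rw [Pi.single_apply, if_neg (fun hmf => hm ⟨j, hmf.symm⟩)]
    exact hSK hxmem.2
  have hvm : star x ᵥ* P = star x := by
    conv_rhs => rw [← hfix, Matrix.star_mulVec, hP1.eq]
  have h5 : star x ⬝ᵥ ((P * D * P) *ᵥ x) = star x ⬝ᵥ (D *ᵥ x) := by
    have hPDP : (P * D * P) *ᵥ x = P *ᵥ (D *ᵥ x) := by
      rw [← Matrix.mulVec_mulVec, hfix, ← Matrix.mulVec_mulVec]
    rw [hPDP, Matrix.dotProduct_mulVec, hvm]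
  have h6 : star x ⬝ᵥ ((P * D * P) *ᵥ x) = lam * (star x ⬝ᵥ x) := by
    rw [hP4, Matrix.smul_mulVec, hfix, dotProduct_smul, smul_eq_mul]
  have hdot : lam * (star x ⬝ᵥ x) = star x ⬝ᵥ (D *ᵥ x) := by rw [← h6, h5]
  have hs0 : star x ⬝ᵥ x = ((∑ m, Complex.normSq (x m) : ℝ) : ℂ) := by
    rw [dotProduct]
    push_cast
    refine Finset.sum_congr rfl fun m _ => ?_
    rw [Pi.star_apply, Complex.star_def, ← Complex.normSq_eq_conj_mul_self]
  have hs1 : star x ⬝ᵥ (D *ᵥ x) = ((∑ m, e m * Complex.normSq (x m) : ℝ) : ℂ) := by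
    rw [dotProduct]
    push_cast
    refine Finset.sum_congr rfl fun m _ => ?_
    rw [hD_def, Matrix.mulVec_diagonal, Pi.star_apply, Complex.star_def]
    rw [show (starRingEnd ℂ) (x m) * ((e m : ℂ) * x m)
        = (e m : ℂ) * ((starRingEnd ℂ) (x m) * x m) by ring]
    rw [← Complex.normSq_eq_conj_mul_self]
  have hS0pos : 0 < ∑ m, Complex.normSq (x m) := by
    obtain ⟨m0, hm0⟩ : ∃ m, x m ≠ 0 := by
      by_contra hcon
      push_neg at hcon
      exact hx0 (funext hcon)
    exact Finset.sum_pos' (fun m _ => Complex.normSq_nonneg _)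
      ⟨m0, Finset.mem_univ _, Complex.normSq_pos.mpr hm0⟩
  refine ⟨(∑ m, e m * Complex.normSq (x m)) / (∑ m, Complex.normSq (x m)), ?_, ?_⟩
  · rw [hs0, hs1] at hdot
    rw [Complex.ofReal_div, eq_div_iff (by exact_mod_cast hS0pos.ne')]
    exact hdot
  · rw [div_le_iff₀ hS0pos]
    rw [show c * ∑ m, Complex.normSq (x m) = ∑ m, c * Complex.normSq (x m) from
      Finset.mul_sum _ _ _]
    refine Finset.sum_le_sum fun m _ => ?_
    by_cases hm : m ∈ Set.range f
    · obtain ⟨j, rfl⟩ := hm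
      exact mul_le_mul_of_nonneg_right (hc j) (Complex.normSq_nonneg _)
    · rw [hsupp m hm]
      simp

end UpperBound

lemma rankKRange_diagonal_eq {N k : ℕ} (hk : 1 ≤ k) (hkN : k ≤ N) (e : Fin N → ℝ)
    (σ : Equiv.Perm (Fin N)) (he : Monotone (e ∘ σ)) :
    rankKRange k (Matrix.diagonal fun m => (e m : ℂ)) =
      (fun s : ℝ => (s : ℂ)) ''
        Set.Icc (e (σ ⟨k - 1, by omega⟩)) (e (σ ⟨N - k, by omega⟩)) := by
  ext lam
  constructor
  · intro hmem
    obtain ⟨s, hs, hsle⟩ := rankKRange_diagonal_le hkN e lam hmem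
      (fun j => σ ⟨j.1, by omega⟩)
      (fun j1 j2 h => by
        have h2 := σ.injective h
        exact Fin.ext (by simpa using congrArg Fin.val h2))
      (e (σ ⟨N - k, by omega⟩))
      (fun j => he (show (⟨j.1, by omega⟩ : Fin N) ≤ ⟨N - k, by omega⟩ by
        rw [Fin.le_def]
        simp only []
        omega))
    obtain ⟨s', hs', hsle'⟩ := rankKRange_diagonal_le hkN (fun m => -(e m)) (-lam)
      (neg_mem_rankKRange_diagonal e lam hmem)
      (fun j => σ ⟨k - 1 + j.1, by omega⟩)
      (fun j1 j2 h => by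
        have h2 := σ.injective h
        exact Fin.ext (by simpa using congrArg Fin.val h2))
      (-(e (σ ⟨k - 1, by omega⟩)))
      (fun j => by
        simp only [neg_le_neg_iff]
        exact he (show (⟨k - 1, by omega⟩ : Fin N) ≤ ⟨k - 1 + j.1, by omega⟩ by
          rw [Fin.le_def]
          simp only []
          omega))
    have hss' : s = -s' := by
      have hc : ((s : ℝ) : ℂ) = ((-s' : ℝ) : ℂ) := by
        rw [← hs]
        push_cast
        rw [← hs']
        ring
      exact_mod_cast hc
    refine ⟨s, ⟨?_, hsle⟩, hs.symm⟩
    rw [hss']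
    linarith [hsle']
  · rintro ⟨s, ⟨hs1, hs2⟩, rfl⟩
    refine mem_rankKRange_diagonal e s
      (fun i => σ ⟨N - 1 - i.1, by omega⟩) (fun i => σ ⟨i.1, by omega⟩)
      (fun i1 i2 h => by
        have h2 := σ.injective h
        have h3 := congrArg Fin.val h2
        simp only [] at h3
        exact Fin.ext (by omega))
      (fun i1 i2 h => by
        have h2 := σ.injective h
        exact Fin.ext (by simpa using congrArg Fin.val h2))
      (fun i => le_trans hs2 (he (show (⟨N - k, by omega⟩ : Fin N) ≤ ⟨N - 1 - i.1, by omega⟩ by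
        rw [Fin.le_def]
        simp only []
        omega)))
      (fun i => le_trans (he (show (⟨i.1, by omega⟩ : Fin N) ≤ ⟨k - 1, by omega⟩ by
        rw [Fin.le_def]
        simp only []
        omega)) hs1)
      ?_
    intro i j hab
    have hji : N - 1 - i.1 = j.1 := by
      have h2 := σ.injective hab
      simpa using congrArg Fin.val h2
    have hval : ∀ (m : ℕ) (hm : m < N), N - k ≤ m → m ≤ k - 1 → e (σ ⟨m, hm⟩) = s := by
      intro m hm h1 h2
      refine le_antisymm ?_ ?_
      · exact le_trans (he (show (⟨m, hm⟩ : Fin N) ≤ ⟨k - 1, by omega⟩ by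
          rw [Fin.le_def]; simp only []; omega)) hs1
      · exact le_trans hs2 (he (show (⟨N - k, by omega⟩ : Fin N) ≤ ⟨m, hm⟩ by
          rw [Fin.le_def]; simp only []; omega))
    have hik : i.1 < k := i.2
    have hjk : j.1 < k := j.2
    constructor
    · rw [hval (N - 1 - i.1) (by omega) (by omega) (by omega),
        hval i.1 (by omega) (by omega) (by omega)]
    · rw [hval (N - 1 - j.1) (by omega) (by omega) (by omega),
        hval j.1 (by omega) (by omega) (by omega)]

/-- for Hermitian A, Λ_k(A) is convex. -/
theorem rankKRange_hermitian_convex (N k : ℕ) (hk : 1 ≤ k)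
    (A : Matrix (Fin N) (Fin N) ℂ) (hA : A.IsHermitian) :
    Convex ℝ (rankKRange k A) := by
  by_cases hkN : k ≤ N
  · have hU1 : (hA.eigenvectorUnitary : Matrix (Fin N) (Fin N) ℂ) *
        star (hA.eigenvectorUnitary : Matrix (Fin N) (Fin N) ℂ) = 1 :=
      Matrix.mem_unitaryGroup_iff.mp (hA.eigenvectorUnitary).2
    have hU2 : star (hA.eigenvectorUnitary : Matrix (Fin N) (Fin N) ℂ) *
        (hA.eigenvectorUnitary : Matrix (Fin N) (Fin N) ℂ) = 1 :=
      Matrix.mem_unitaryGroup_iff'.mp (hA.eigenvectorUnitary).2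
    have hconj := rankKRange_conj k A (hA.eigenvectorUnitary : Matrix (Fin N) (Fin N) ℂ) hU1 hU2
    rw [← hconj, show star (hA.eigenvectorUnitary : Matrix (Fin N) (Fin N) ℂ) * A *
        (hA.eigenvectorUnitary : Matrix (Fin N) (Fin N) ℂ) =
        Matrix.diagonal (RCLike.ofReal ∘ hA.eigenvalues) by
      have := hA.conjStarAlgAut_star_eigenvectorUnitary
      simpa [Unitary.conjStarAlgAut_apply] using this]
    have hdiag : Matrix.diagonal (RCLike.ofReal ∘ hA.eigenvalues) =
        Matrix.diagonal fun m => ((hA.eigenvalues m : ℝ) : ℂ) := rfl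
    rw [hdiag, rankKRange_diagonal_eq hk hkN _ (Tuple.sort hA.eigenvalues)
      (Tuple.monotone_sort _)]
    have himg : (fun s : ℝ => (s : ℂ)) = ⇑(Complex.ofRealAm.toLinearMap) := rfl
    rw [himg]
    exact (convex_Icc _ _).linear_image _
  · have hempty : rankKRange k A = ∅ := by
      rw [Set.eq_empty_iff_forall_notMem]
      rintro lam ⟨P, _, _, h3, _⟩
      have hle := Matrix.rank_le_card_width P
      rw [h3] at hle
      simp only [Fintype.card_fin] at hle
      omega
    rw [hempty]
    exact convex_empty
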